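/- The spectrum of the number operator H = a⁺ ∘ a⁻, viewed as an element of the ℚ_p-algebra of continuous linear endomorphisms of C(ℤ_p, ℚ_p), is equal to the image of ℤ_p in ℚ_p (the closure of the non-negative integers in ℚ_p): H − λ·id fails to be invertible exactly for λ in the image of ℤ_p. -/

import Mathlib

open Finset

/-- The raising operator `a⁺`: `(a⁺ f)(x) = x · f(x - 1)`. -/
noncomputable def aPlus (p : ℕ) [Fact p.Prime] (f : ℤ_[p] → ℚ_[p]) (x : ℤ_[p]) : ℚ_[p] :=
  (x : ℚ_[p]) * f (x - 1)

/-- The lowering operator `a⁻`: `(a⁻ f)(x) = f(x + 1) - f(x)`. -/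
noncomputable def aMinus (p : ℕ) [Fact p.Prime] (f : ℤ_[p] → ℚ_[p]) (x : ℤ_[p]) : ℚ_[p] :=
  f (x + 1) - f x

lemma key_id {p : ℕ} [Fact p.Prime] (y : ℚ_[p]) (n : ℕ) :
    y * ((∏ i ∈ range n, (y - i)) - ∏ i ∈ range n, (y - 1 - i))
      = n * ∏ i ∈ range n, (y - i) := by
  cases n with
  | zero => simp
  | succ m =>
    have h1 : (∏ i ∈ range (m+1), (y - i)) = (∏ i ∈ range m, (y - (i+1))) * y := by
      rw [Finset.prod_range_succ']; simp
    have h2 : (∏ i ∈ range (m+1), (y - 1 - i)) = (∏ i ∈ range m, (y - (i+1))) * (y - 1 - m) := by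
      rw [Finset.prod_range_succ]
      congr 1
      exact Finset.prod_congr rfl (fun i _ => by ring)
    rw [h1, h2]
    push_cast
    ring

noncomputable def gnat (p : ℕ) [Fact p.Prime] (n : ℕ) : C(ℤ_[p], ℚ_[p]) :=
  ⟨fun x => ∏ i ∈ range n, ((x : ℚ_[p]) - i), by
    apply continuous_finset_prod
    intro i _
    exact continuous_subtype_val.sub continuous_const⟩

lemma gnat_ne_zero (p : ℕ) [Fact p.Prime] (n : ℕ) : gnat p n ≠ 0 := by
  intro h
  have h2 : gnat p n (n : ℤ_[p]) = 0 := by rw [h]; rfl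
  simp only [gnat, ContinuousMap.coe_mk] at h2
  rw [Finset.prod_eq_zero_iff] at h2
  obtain ⟨i, hi, hzero⟩ := h2
  rw [Finset.mem_range] at hi
  have : ((n : ℤ_[p]) : ℚ_[p]) = (n : ℚ_[p]) := by push_cast; rfl
  rw [this, sub_eq_zero] at hzero
  exact absurd (Nat.cast_injective hzero) hi.ne'

lemma nat_mem_spectrum (p : ℕ) [Fact p.Prime]
    (H : C(ℤ_[p], ℚ_[p]) →L[ℚ_[p]] C(ℤ_[p], ℚ_[p]))
    (hH : ∀ (f : C(ℤ_[p], ℚ_[p])) (x : ℤ_[p]), H f x = aPlus p (aMinus p (⇑f)) x)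
    (n : ℕ) : ((n : ℚ_[p])) ∈ spectrum ℚ_[p] H := by
  rw [spectrum.mem_iff]
  intro hu
  -- eigenvector equation
  have heig : (algebraMap ℚ_[p] (C(ℤ_[p], ℚ_[p]) →L[ℚ_[p]] C(ℤ_[p], ℚ_[p])) (n : ℚ_[p]) - H)
      (gnat p n) = 0 := by
    ext x
    simp only [ContinuousLinearMap.sub_apply, ContinuousMap.sub_apply,
      ContinuousMap.zero_apply, Algebra.algebraMap_eq_smul_one,
      ContinuousLinearMap.smul_apply, ContinuousLinearMap.one_apply,
      ContinuousMap.smul_apply, smul_eq_mul]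
    rw [hH]
    simp only [aPlus, aMinus, sub_add_cancel, gnat, ContinuousMap.coe_mk]
    have hcast : ∀ i : ℕ, (((x - 1 : ℤ_[p]) : ℚ_[p]) - i) = ((x : ℚ_[p]) - 1 - i) := by
      intro i; push_cast; ring
    rw [sub_eq_zero]
    calc (n : ℚ_[p]) * ∏ i ∈ range n, ((x : ℚ_[p]) - i)
        = (x : ℚ_[p]) * ((∏ i ∈ range n, ((x : ℚ_[p]) - i))
            - ∏ i ∈ range n, ((x : ℚ_[p]) - 1 - i)) := (key_id _ n).symm
      _ = _ := by rw [Finset.prod_congr rfl (fun i _ => (hcast i))]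
  set T := algebraMap ℚ_[p] (C(ℤ_[p], ℚ_[p]) →L[ℚ_[p]] C(ℤ_[p], ℚ_[p])) (n : ℚ_[p]) - H
  obtain ⟨u, hu⟩ := hu
  apply gnat_ne_zero p n
  calc gnat p n = ((1 : C(ℤ_[p], ℚ_[p]) →L[ℚ_[p]] C(ℤ_[p], ℚ_[p]))) (gnat p n) := rfl
    _ = ((↑u⁻¹ * ↑u : C(ℤ_[p], ℚ_[p]) →L[ℚ_[p]] C(ℤ_[p], ℚ_[p]))) (gnat p n) := by
        rw [Units.inv_mul]
    _ = (↑u⁻¹ : C(ℤ_[p], ℚ_[p]) →L[ℚ_[p]] C(ℤ_[p], ℚ_[p])) (T (gnat p n)) := by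
        rw [ContinuousLinearMap.mul_apply, hu]
    _ = 0 := by rw [heig, map_zero]

theorem numberOp_spectrum (p : ℕ) [Fact p.Prime]
    (H : C(ℤ_[p], ℚ_[p]) →L[ℚ_[p]] C(ℤ_[p], ℚ_[p]))
    (hH : ∀ (f : C(ℤ_[p], ℚ_[p])) (x : ℤ_[p]), H f x = aPlus p (aMinus p (⇑f)) x) :
    spectrum ℚ_[p] H = Set.range (fun z : ℤ_[p] => (z : ℚ_[p])) := by
  apply Set.eq_of_subset_of_subset
  · -- spectrum ⊆ unit ball = range
    intro lam hlam
    have hnorm : ‖lam‖ ≤ ‖H‖ := spectrum.norm_le_norm_of_mem (𝕜 := ℚ_[p]) (A := C(ℤ_[p], ℚ_[p]) →L[ℚ_[p]] C(ℤ_[p], ℚ_[p])) hlam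
    have hH1 : ‖H‖ ≤ 1 := by
      apply ContinuousLinearMap.opNorm_le_bound _ zero_le_one
      intro f
      rw [one_mul]
      apply ContinuousMap.norm_le _ (norm_nonneg f) |>.mpr
      intro x
      rw [hH]
      simp only [aPlus, aMinus, sub_add_cancel]
      calc ‖(x : ℚ_[p]) * (f x - f (x - 1))‖
          = ‖(x : ℚ_[p])‖ * ‖f x - f (x - 1)‖ := norm_mul _ _
        _ ≤ 1 * ‖f x - f (x - 1)‖ := by
            apply mul_le_mul_of_nonneg_right x.2 (norm_nonneg _)
        _ = ‖f x - f (x - 1)‖ := one_mul _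
        _ ≤ max ‖f x‖ ‖f (x - 1)‖ := by
            have := Padic.nonarchimedean (f x) (-(f (x-1)))
            simpa [sub_eq_add_neg] using this
        _ ≤ ‖f‖ := max_le (f.norm_coe_le_norm x) (f.norm_coe_le_norm (x - 1))
    exact ⟨⟨lam, hnorm.trans hH1⟩, rfl⟩
  · rintro _ ⟨z, rfl⟩
    have hz : z ∈ closure (Set.range (Nat.cast : ℕ → ℤ_[p])) :=
      PadicInt.denseRange_natCast z
    have hcont : Continuous (fun z : ℤ_[p] => (z : ℚ_[p])) := continuous_subtype_val
    have himg : (z : ℚ_[p]) ∈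
        closure ((fun z : ℤ_[p] => (z : ℚ_[p])) '' (Set.range (Nat.cast : ℕ → ℤ_[p]))) :=
      map_mem_closure hcont hz (Set.subset_preimage_image _ _)
    refine (spectrum.isClosed (𝕜 := ℚ_[p]) H).closure_subset
      ((closure_mono ?_) himg)
    rintro _ ⟨_, ⟨n, rfl⟩, rfl⟩
    have hc : ((fun z : ℤ_[p] => (z : ℚ_[p])) (n : ℤ_[p])) = (n : ℚ_[p]) := by push_cast; rfl
    rw [hc]
    exact nat_mem_spectrum p H hH n
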